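/- Let 0 < m < 1 and ε > 0. For each k > 0, let σ₊(k) denote the unique eigenvalue of the local-interaction linear-stability matrix A₀(k) with positive real part (which is real and positive). Then σ₊ is strictly increasing: for all 0 < k₁ < k₂, σ₊(k₁) < σ₊(k₂). Hence the growth rate increases without a maximizing wavenumber, so the δ → 0 problem is ill-posed, with arbitrarily large wavenumbers growing fastest. -/
import Mathlib

set_option maxHeartbeats 2000000 in
theorem my_det_fin_four {R : Type*} [CommRing R] (M : Matrix (Fin 4) (Fin 4) R) :
    M.det =
      M 0 0 * M 1 1 * M 2 2 * M 3 3 - M 0 0 * M 1 1 * M 2 3 * M 3 2 -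
      M 0 0 * M 1 2 * M 2 1 * M 3 3 + M 0 0 * M 1 2 * M 2 3 * M 3 1 +
      M 0 0 * M 1 3 * M 2 1 * M 3 2 - M 0 0 * M 1 3 * M 2 2 * M 3 1 -
      M 0 1 * M 1 0 * M 2 2 * M 3 3 + M 0 1 * M 1 0 * M 2 3 * M 3 2 +
      M 0 1 * M 1 2 * M 2 0 * M 3 3 - M 0 1 * M 1 2 * M 2 3 * M 3 0 -
      M 0 1 * M 1 3 * M 2 0 * M 3 2 + M 0 1 * M 1 3 * M 2 2 * M 3 0 +
      M 0 2 * M 1 0 * M 2 1 * M 3 3 - M 0 2 * M 1 0 * M 2 3 * M 3 1 -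
      M 0 2 * M 1 1 * M 2 0 * M 3 3 + M 0 2 * M 1 1 * M 2 3 * M 3 0 +
      M 0 2 * M 1 3 * M 2 0 * M 3 1 - M 0 2 * M 1 3 * M 2 1 * M 3 0 -
      M 0 3 * M 1 0 * M 2 1 * M 3 2 + M 0 3 * M 1 0 * M 2 2 * M 3 1 +
      M 0 3 * M 1 1 * M 2 0 * M 3 2 - M 0 3 * M 1 1 * M 2 2 * M 3 0 -
      M 0 3 * M 1 2 * M 2 0 * M 3 1 + M 0 3 * M 1 2 * M 2 1 * M 3 0 := by
  simp [Matrix.det_succ_row_zero, Fin.sum_univ_succ, Fin.succAbove,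
    show (Fin.succ 2 : Fin 4) = 3 from rfl, show (Fin.castSucc (2:Fin 3) : Fin 4) = 2 from rfl,
    show ((1:Fin 3) < 2) from by decide]
  ring



/-- The local-interaction (`δ → 0`) linear-stability matrix `A₀(k)` for parameters
`m, ε` and wavenumber `k`:
`A₀(k) = [[a,0,0,c],[0,a,c,0],[d,0,−b,0],[0,d,0,−b]]` with
`a = (1/(1+m)² − 1)k²`, `b = (1+m)/ε`, `c = −2(2 − 1/(1+m))k²`, `d = m/(ε(1+m))`. -/
noncomputable def A0 (m ε k : ℝ) : Matrix (Fin 4) (Fin 4) ℝ :=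
  !![(1 / (1 + m) ^ 2 - 1) * k ^ 2, 0, 0, -2 * (2 - 1 / (1 + m)) * k ^ 2;
     0, (1 / (1 + m) ^ 2 - 1) * k ^ 2, -2 * (2 - 1 / (1 + m)) * k ^ 2, 0;
     m / (ε * (1 + m)), 0, -((1 + m) / ε), 0;
     0, m / (ε * (1 + m)), 0, -((1 + m) / ε)]

/-- Let `0 < m < 1` and `ε > 0`.  For `k > 0` the unique eigenvalue
of `A₀(k)` with positive real part is real and positive; writing `σ₊(k)` for it, the
map `k ↦ σ₊(k)` is strictly increasing.  Formally: if `0 < k₁ < k₂` and `σ₁, σ₂ > 0`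
are positive real eigenvalues of `A₀(k₁)`, `A₀(k₂)` respectively, then `σ₁ < σ₂`.
Hence the growth rate has no maximizing wavenumber and the `δ → 0` problem is
ill-posed, with arbitrarily large wavenumbers growing fastest. -/
theorem local_growth_rate_strictly_increasing
    (m ε : ℝ) (hm0 : 0 < m) (hm1 : m < 1) (hε : 0 < ε)
    (k₁ k₂ σ₁ σ₂ : ℝ) (hk₁ : 0 < k₁) (hk₁₂ : k₁ < k₂)
    (hσ₁ : 0 < σ₁) (hσ₂ : 0 < σ₂)
    (heig₁ : (A0 m ε k₁ - σ₁ • (1 : Matrix (Fin 4) (Fin 4) ℝ)).det = 0)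
    (heig₂ : (A0 m ε k₂ - σ₂ • (1 : Matrix (Fin 4) (Fin 4) ℝ)).det = 0) :
    σ₁ < σ₂ := by
  have h1 : (0:ℝ) < 1 + m := by linarith
  have h1' : (1:ℝ) + m ≠ 0 := ne_of_gt h1
  have h2 : ε ≠ 0 := ne_of_gt hε
  -- factorization of the determinant
  have hfac : ∀ k σ : ℝ,
      (A0 m ε k - σ • (1 : Matrix (Fin 4) (Fin 4) ℝ)).det * (ε * (1+m)^2)^2 =
      (ε*(1+m)^2*σ^2 + ((1+m)^3 + ε*m*(2+m)*k^2)*σ + (m*(2+m)*(1+m) + 2*m*(1+2*m))*k^2) *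
      (ε*(1+m)^2*σ^2 + ((1+m)^3 + ε*m*(2+m)*k^2)*σ - m^2*(1-m)*k^2) := by
    intro k σ
    rw [my_det_fin_four]
    simp [A0, Matrix.sub_apply, Matrix.smul_apply, Matrix.one_apply]
    field_simp
    ring
  -- positivity of the first factor
  have hFpos : ∀ k σ : ℝ, 0 < σ →
      0 < ε*(1+m)^2*σ^2 + ((1+m)^3 + ε*m*(2+m)*k^2)*σ + (m*(2+m)*(1+m) + 2*m*(1+2*m))*k^2 := by
    intro k σ hσ
    have t1 : 0 < ε*(1+m)^2*σ^2 := by positivity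
    have t2 : 0 < (1+m)^3*σ := by positivity
    have t3 : 0 ≤ ε*m*(2+m)*k^2*σ := by positivity
    have t4 : 0 ≤ (m*(2+m)*(1+m) + 2*m*(1+2*m))*k^2 := by positivity
    nlinarith [t1, t2, t3, t4]
  -- second factor vanishes
  have hG : ∀ k σ : ℝ, 0 < σ →
      (A0 m ε k - σ • (1 : Matrix (Fin 4) (Fin 4) ℝ)).det = 0 →
      ε*(1+m)^2*σ^2 + ((1+m)^3 + ε*m*(2+m)*k^2)*σ - m^2*(1-m)*k^2 = 0 := by
    intro k σ hσ hdet
    have h := hfac k σ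
    rw [hdet, zero_mul] at h
    rcases mul_eq_zero.mp h.symm with h' | h'
    · exact absurd h' (ne_of_gt (hFpos k σ hσ))
    · exact h'
  have E1 := hG k₁ σ₁ hσ₁ heig₁
  have E2 := hG k₂ σ₂ hσ₂ heig₂
  -- from E1 :  m²(1-m) - ε m (2+m) σ₁ > 0
  have star : 0 < m^2*(1-m) - ε*m*(2+m)*σ₁ := by
    by_contra h
    push_neg at h
    have hk1sq : 0 < k₁^2 := by positivity
    nlinarith [mul_pos (mul_pos hε (pow_pos h1 2)) (mul_pos hσ₁ hσ₁),
      mul_pos (pow_pos h1 3) hσ₁, mul_nonneg (le_of_lt hk1sq) (neg_nonneg.mpr h)]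
  -- conclude
  by_contra h
  push_neg at h
  have hk2 : k₁^2 < k₂^2 := by nlinarith
  nlinarith [mul_pos (sub_pos.mpr hk2) star,
    mul_nonneg (sub_nonneg.mpr h) (le_of_lt (mul_pos (mul_pos hε (pow_pos h1 2)) (by linarith : (0:ℝ) < σ₁ + σ₂))),
    mul_nonneg (sub_nonneg.mpr h) (le_of_lt (pow_pos h1 3)),
    mul_nonneg (sub_nonneg.mpr h) (le_of_lt (mul_pos (mul_pos (mul_pos hε hm0) (by linarith : (0:ℝ) < 2+m)) (pow_pos (lt_trans hk₁ hk₁₂) 2)))]
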